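/- (Circulant optimizer, Lemma 4.1.) Consider the semidefinite program G = sup{ γ ∈ ℝ : ∃ symmetric (T+1)×(T+1) real matrix M and β ∈ ℝ with M ⪰ 0, β + (1/ε)·tr(Ω M) ≤ 0, and M − [[ (1/2)·I, −(1/2)·1 ],[ −(1/2)·1ᵀ, γT − β ]] ⪰ 0 }, where Ω = [[ v·P + μ̄²·11ᵀ, μ̄·1 ],[ μ̄·1ᵀ, 1 ]], P = circ(ρ) is a symmetric circulant matrix (ρ_t = ρ_{(T−t) mod T}), v ≥ 0, μ̄ ∈ ℝ, and ε ∈ (0,1). If (M, β, γ) is feasible for this program and attains the supremum G, then there exist m : Fin T → ℝ with m_t = m_{(T−t) mod T} for all t and m_T, m_{T+1} ∈ ℝ such that the triple (M', β, γ) with M' = [[circ(m), m_T·1],[m_T·1ᵀ, m_{T+1}]] is also feasible and attains G. -/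

import Mathlib

noncomputable section

/-- The circulant matrix `circ c` with entries `c ((j - i) mod T)`. -/
def circ (T : ℕ) (c : Fin T → ℝ) : Matrix (Fin T) (Fin T) ℝ :=
  Matrix.of fun i j => c (j - i)

/-- Bordered matrix `[[C, b·1], [b·1ᵀ, d]]`. -/
def border (T : ℕ) (C : Matrix (Fin T) (Fin T) ℝ) (b d : ℝ) :
    Matrix (Fin T ⊕ Unit) (Fin T ⊕ Unit) ℝ :=
  Matrix.fromBlocks C
    (Matrix.of fun (_ : Fin T) (_ : Unit) => b)
    (Matrix.of fun (_ : Unit) (_ : Fin T) => b)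
    (Matrix.of fun (_ : Unit) (_ : Unit) => d)

/-- The second-order moment matrix `Ω = [[v·P + μ̄²·11ᵀ, μ̄·1], [μ̄·1ᵀ, 1]]`. -/
def momentMatrix (T : ℕ) (v μbar : ℝ) (P : Matrix (Fin T) (Fin T) ℝ) :
    Matrix (Fin T ⊕ Unit) (Fin T ⊕ Unit) ℝ :=
  border T (v • P + μbar ^ 2 • Matrix.of fun (_ _ : Fin T) => (1 : ℝ)) μbar 1

/-- The matrix `[[(1/2)·I, -(1/2)·1], [-(1/2)·1ᵀ, γT - β]]` appearing in the second
semidefinite constraint. -/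
def constrMatrix (T : ℕ) (γ β : ℝ) : Matrix (Fin T ⊕ Unit) (Fin T ⊕ Unit) ℝ :=
  border T ((1 / 2 : ℝ) • (1 : Matrix (Fin T) (Fin T) ℝ)) (-(1 / 2)) (γ * T - β)

/-- Feasibility of `(M, β, γ)` for the semidefinite program defining the worst-case
growth rate: `M` is symmetric, `M ⪰ 0`, `β + (1/ε)·tr(Ω M) ≤ 0`, and
`M - [[(1/2)·I, -(1/2)·1], [-(1/2)·1ᵀ, γT - β]] ⪰ 0`. -/
def Feasible (T : ℕ) (ε : ℝ) (Ω M : Matrix (Fin T ⊕ Unit) (Fin T ⊕ Unit) ℝ)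
    (β γ : ℝ) : Prop :=
  M.IsSymm ∧ M.PosSemidef ∧ β + (1 / ε) * (Ω * M).trace ≤ 0 ∧
    (M - constrMatrix T γ β).PosSemidef

namespace CircHelp

lemma psd_smul {n : Type*} [Fintype n] {A : Matrix n n ℝ} (hA : A.PosSemidef)
    {c : ℝ} (hc : 0 ≤ c) : (c • A).PosSemidef := by
  refine ⟨?_, fun x => ?_⟩
  · unfold Matrix.IsHermitian
    rw [Matrix.conjTranspose_smul, hA.1.eq]
    simp
  · have := hA.2 x
    have h2 : (x.sum fun i xi => x.sum fun j xj => star xi * (c • A) i j * xj) =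
        c * (x.sum fun i xi => x.sum fun j xj => star xi * A i j * xj) := by
      rw [Finsupp.mul_sum]
      refine Finsupp.sum_congr fun i _ => ?_
      rw [Finsupp.mul_sum]
      refine Finsupp.sum_congr fun j _ => ?_
      simp only [Matrix.smul_apply, smul_eq_mul, star_trivial]
      ring
    rw [h2]
    exact mul_nonneg hc this

lemma psd_sum {n : Type*} [Fintype n] {ι : Type*} (s : Finset ι)
    (f : ι → Matrix n n ℝ) (h : ∀ i ∈ s, (f i).PosSemidef) :
    (∑ i ∈ s, f i).PosSemidef := by
  classical
  induction s using Finset.induction with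
  | empty => simpa using Matrix.PosSemidef.zero
  | insert a s hx ih =>
    rw [Finset.sum_insert hx]
    exact (h _ (Finset.mem_insert_self _ _)).add
      (ih fun i hi => h i (Finset.mem_insert_of_mem hi))

lemma trace_submatrix_equiv {n m : Type*} [Fintype n] [Fintype m] [DecidableEq n]
    (A : Matrix n n ℝ) (e : m ≃ n) : (A.submatrix e e).trace = A.trace := by
  simp only [Matrix.trace, Matrix.diag, Matrix.submatrix_apply]
  exact Equiv.sum_comp e fun i => A i i

variable {T : ℕ} [NeZero T]

/-- Cyclic shift on the index type. -/
def se (k : Fin T) : (Fin T ⊕ Unit) ≃ (Fin T ⊕ Unit) :=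
  (Equiv.addRight k).sumCongr (Equiv.refl Unit)

@[simp] lemma se_inl (k i : Fin T) : se k (Sum.inl i) = Sum.inl (i + k) := rfl
@[simp] lemma se_inr (k : Fin T) (u : Unit) : se k (Sum.inr u) = Sum.inr u := rfl

/-- Conjugation by the shift permutation. -/
def conj (k : Fin T) (A : Matrix (Fin T ⊕ Unit) (Fin T ⊕ Unit) ℝ) :
    Matrix (Fin T ⊕ Unit) (Fin T ⊕ Unit) ℝ :=
  A.submatrix (se k) (se k)

lemma conj_border (k : Fin T) (C : Matrix (Fin T) (Fin T) ℝ) (b d : ℝ)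
    (hC : ∀ i j, C (i + k) (j + k) = C i j) :
    conj k (border T C b d) = border T C b d := by
  ext a c
  cases a <;> cases c <;>
    simp [conj, border, Matrix.submatrix_apply, Matrix.fromBlocks, hC]

lemma conj_momentMatrix (k : Fin T) (v μbar : ℝ) (ρ : Fin T → ℝ) :
    conj k (momentMatrix T v μbar (circ T ρ)) = momentMatrix T v μbar (circ T ρ) := by
  refine conj_border k _ _ _ fun i j => ?_
  have h : j + k - (i + k) = j - i := by abel
  simp [circ, Matrix.add_apply, Matrix.smul_apply, h]

lemma conj_constrMatrix (k : Fin T) (γ β : ℝ) :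
    conj k (constrMatrix T γ β) = constrMatrix T γ β := by
  refine conj_border k _ _ _ fun i j => ?_
  simp only [Matrix.smul_apply, Matrix.one_apply, smul_eq_mul, add_left_inj]

end CircHelp

open CircHelp in
/-- Circulant optimizer (Lemma 4.1): if `(M, β, γ)` is feasible for the SDP with
data `Ω = [[v·circ ρ + μ̄²·11ᵀ, μ̄·1], [μ̄·1ᵀ, 1]]` (with `ρ` symmetric, `v ≥ 0`,
`ε ∈ (0,1)`) and `γ` attains the supremum `G`, then there is a feasible optimal
solution `(M', β, γ)` where `M' = [[circ m, mT·1], [mT·1ᵀ, mT1]]` with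
`m t = m (-t)`. -/
theorem circulant_optimizer (T : ℕ) (hT : 1 ≤ T) (ε : ℝ) (hε : ε ∈ Set.Ioo (0 : ℝ) 1)
    (ρ : Fin T → ℝ) (hρ : ∀ t : Fin T, ρ t = ρ (-t)) (v μbar : ℝ) (hv : 0 ≤ v)
    (M : Matrix (Fin T ⊕ Unit) (Fin T ⊕ Unit) ℝ) (β γ : ℝ)
    (hfeas : Feasible T ε (momentMatrix T v μbar (circ T ρ)) M β γ)
    (hopt : γ = sSup {g : ℝ | ∃ M' β',
      Feasible T ε (momentMatrix T v μbar (circ T ρ)) M' β' g}) :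
    ∃ (m : Fin T → ℝ) (mT mT1 : ℝ), (∀ t : Fin T, m t = m (-t)) ∧
      Feasible T ε (momentMatrix T v μbar (circ T ρ))
        (border T (circ T m) mT mT1) β γ := by
  haveI : NeZero T := ⟨by omega⟩
  obtain ⟨hsymm, hpsd, htr, hcon⟩ := hfeas
  have hsy : ∀ a b, M a b = M b a := fun a b => hsymm.apply b a
  have hTne : (T : ℝ) ≠ 0 := by positivity
  set Ω := momentMatrix T v μbar (circ T ρ) with hΩ
  set C := constrMatrix T γ β with hC
  set M' : Matrix (Fin T ⊕ Unit) (Fin T ⊕ Unit) ℝ :=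
    (T : ℝ)⁻¹ • ∑ k : Fin T, conj k M with hM'
  set m : Fin T → ℝ := fun t => (T : ℝ)⁻¹ * ∑ k : Fin T, M (Sum.inl (k - t)) (Sum.inl k)
    with hm
  set mT : ℝ := (T : ℝ)⁻¹ * ∑ k : Fin T, M (Sum.inl k) (Sum.inr ()) with hmT
  refine ⟨m, mT, M (Sum.inr ()) (Sum.inr ()), ?_, ?_⟩
  · intro t
    simp only [hm]
    congr 1
    refine Fintype.sum_equiv (Equiv.subRight t) _ _ fun k => ?_
    simp only [Equiv.subRight_apply, sub_neg_eq_add, sub_add_cancel]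
    exact hsy _ _
  -- the averaged matrix equals the bordered circulant
  have key : border T (circ T m) mT (M (Sum.inr ()) (Sum.inr ())) = M' := by
    ext a b
    cases a with
    | inl i =>
      cases b with
      | inl j =>
        simp only [hM', border, circ, Matrix.fromBlocks_apply₁₁, Matrix.of_apply,
          Matrix.smul_apply, Matrix.sum_apply, smul_eq_mul, hm, conj,
          Matrix.submatrix_apply, se_inl]
        congr 1
        refine Fintype.sum_equiv (Equiv.subRight j) _ _ fun k => ?_
        simp only [Equiv.subRight_apply]
        congr 2 <;> abel
      | inr u =>
        cases u
        simp only [hM', border, Matrix.fromBlocks_apply₁₂, Matrix.of_apply,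
          Matrix.smul_apply, Matrix.sum_apply, smul_eq_mul, hmT, conj,
          Matrix.submatrix_apply, se_inl, se_inr]
        congr 1
        refine Fintype.sum_equiv (Equiv.subRight i) _ _ fun k => ?_
        simp only [Equiv.subRight_apply]
        congr 2
        abel
    | inr u =>
      cases u
      cases b with
      | inl j =>
        simp only [hM', border, Matrix.fromBlocks_apply₂₁, Matrix.of_apply,
          Matrix.smul_apply, Matrix.sum_apply, smul_eq_mul, hmT, conj,
          Matrix.submatrix_apply, se_inl, se_inr]
        congr 1
        refine Fintype.sum_equiv (Equiv.subRight j) _ _ fun k => ?_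
        simp only [Equiv.subRight_apply]
        rw [hsy]
        congr 2
        abel
      | inr w =>
        cases w
        simp only [hM', border, Matrix.fromBlocks_apply₂₂, Matrix.of_apply,
          Matrix.smul_apply, Matrix.sum_apply, smul_eq_mul, conj,
          Matrix.submatrix_apply, se_inr, Finset.sum_const, Finset.card_univ,
          Fintype.card_fin, nsmul_eq_mul]
        rw [← mul_assoc, inv_mul_cancel₀ hTne, one_mul]
  rw [key]
  have conj_psd : ∀ (k : Fin T) (A : Matrix (Fin T ⊕ Unit) (Fin T ⊕ Unit) ℝ),
      A.PosSemidef → (conj k A).PosSemidef := fun k A hA => hA.submatrix _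
  refine ⟨?_, ?_, ?_, ?_⟩
  · -- symmetry
    show M'.IsSymm
    unfold Matrix.IsSymm
    simp only [hM', Matrix.transpose_smul, Matrix.transpose_sum]
    congr 1
    refine Finset.sum_congr rfl fun k _ => ?_
    show Matrix.transpose (conj k M) = conj k M
    unfold conj
    rw [Matrix.transpose_submatrix, hsymm.eq]
  · exact psd_smul (psd_sum _ _ fun k _ => conj_psd k M hpsd) (by positivity)
  · -- trace constraint
    have htrk : ∀ k : Fin T, (Ω * conj k M).trace = (Ω * M).trace := by
      intro k
      have hΩk : conj k Ω = Ω := by rw [hΩ]; exact conj_momentMatrix k v μbar ρ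
      conv_lhs => rw [← hΩk]
      show ((Ω.submatrix (se k) (se k)) * (M.submatrix (se k) (se k))).trace = _
      rw [Matrix.submatrix_mul_equiv]
      exact trace_submatrix_equiv _ _
    have htrM : (Ω * M').trace = (Ω * M).trace := by
      simp only [hM', Matrix.mul_smul, Matrix.mul_sum, Matrix.trace_smul,
        Matrix.trace_sum, smul_eq_mul]
      rw [Finset.sum_congr rfl fun k _ => htrk k]
      simp only [Finset.sum_const, Finset.card_univ, Fintype.card_fin, nsmul_eq_mul]
      rw [← mul_assoc, inv_mul_cancel₀ hTne, one_mul]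
    rw [htrM]; exact htr
  · -- second PSD constraint
    have hsum : M' - C = (T : ℝ)⁻¹ • ∑ k : Fin T, conj k (M - C) := by
      have hck : ∀ k : Fin T, conj k (M - C) = conj k M - C := by
        intro k
        have h0 : conj k (M - C) = conj k M - conj k C := rfl
        rw [h0, hC, conj_constrMatrix]
      rw [Finset.sum_congr rfl fun k _ => hck k, Finset.sum_sub_distrib,
        Finset.sum_const, Finset.card_univ, Fintype.card_fin, smul_sub, hM',
        ← Nat.cast_smul_eq_nsmul ℝ, smul_smul, inv_mul_cancel₀ hTne, one_smul]
    rw [hsum]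
    exact psd_smul (psd_sum _ _ fun k _ => conj_psd k _ hcon) (by positivity)
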